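/- Let Σ and B be n×n complex Hermitian matrices with Σ² = I, and let w ∈ ℂⁿ. Define u(θ) = exp(−i(θ/2)Σ)·w (matrix exponential applied to w) and f(θ) = Re⟨u(θ), B·u(θ)⟩. Then for every θ ∈ ℝ, f is differentiable at θ with f′(θ) = (1/2)·( f(θ + π/2) − f(θ − π/2) ). -/

import Mathlib

open Matrix Real

lemma exp_smul_of_sq_eq_one {A : Type*} [NormedRing A] [NormedAlgebra ℂ A] [CompleteSpace A]
    {s : A} (hs : s * s = 1) (z : ℂ) :
    NormedSpace.exp (z • s) = Complex.cosh z • (1 : A) + Complex.sinh z • s := by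
  rw [NormedSpace.exp_eq_tsum (𝕂 := ℂ)]
  refine (HasSum.even_add_odd ?_ ?_).tsum_eq
  · have h : ∀ k : ℕ, ((((2 * k).factorial : ℕ) : ℂ)⁻¹) • (z • s) ^ (2 * k)
        = (z ^ (2 * k) / ((2 * k).factorial : ℕ)) • (1 : A) := by
      intro k
      rw [smul_pow, pow_mul s, sq, hs, one_pow, smul_smul]
      congr 1
      rw [div_eq_mul_inv, mul_comm]
    simp only [h]
    exact (Complex.hasSum_cosh z).smul_const 1
  · have h : ∀ k : ℕ, ((((2 * k + 1).factorial : ℕ) : ℂ)⁻¹) • (z • s) ^ (2 * k + 1)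
        = (z ^ (2 * k + 1) / ((2 * k + 1).factorial : ℕ)) • s := by
      intro k
      rw [smul_pow, pow_succ s, pow_mul s, sq, hs, one_pow, one_mul, smul_smul]
      congr 1
      rw [div_eq_mul_inv, mul_comm]
    simp only [h]
    exact (Complex.hasSum_sinh z).smul_const s

lemma matrix_exp_smul_of_sq_eq_one {m : ℕ} {s : Matrix (Fin m) (Fin m) ℂ}
    (hs : s * s = 1) (z : ℂ) :
    NormedSpace.exp (z • s)
      = Complex.cosh z • (1 : Matrix (Fin m) (Fin m) ℂ) + Complex.sinh z • s := by
  letI : SeminormedRing (Matrix (Fin m) (Fin m) ℂ) := Matrix.linftyOpSemiNormedRing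
  letI : NormedRing (Matrix (Fin m) (Fin m) ℂ) := Matrix.linftyOpNormedRing
  letI : NormedAlgebra ℂ (Matrix (Fin m) (Fin m) ℂ) := Matrix.linftyOpNormedAlgebra
  exact exp_smul_of_sq_eq_one hs z

/-- Parameter-shift rule: for a gate `U(θ) = exp(-i (θ/2) S)` generated by a Hermitian
involution `S` (e.g. a tensor product of Pauli operators), applied to a state `w`, with a
Hermitian observable `B`, the expectation value `f θ = Re ⟨u θ, B (u θ)⟩` is differentiable
with derivative `(f (θ + π/2) - f (θ - π/2)) / 2`. -/
theorem parameter_shift_rule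
    {n : ℕ} (S B : Matrix (Fin n) (Fin n) ℂ)
    (hS : S.IsHermitian) (hS2 : S * S = 1)
    (hB : B.IsHermitian) (w : Fin n → ℂ)
    (u : ℝ → Fin n → ℂ)
    (hu : ∀ θ : ℝ, u θ = (NormedSpace.exp ((-(Complex.I) * (θ / 2 : ℝ)) • S)).mulVec w)
    (f : ℝ → ℝ)
    (hf : ∀ θ : ℝ, f θ = (star (u θ) ⬝ᵥ B.mulVec (u θ)).re) :
    ∀ θ : ℝ, HasDerivAt f ((1 / 2) * (f (θ + π / 2) - f (θ - π / 2))) θ := by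
  -- closed form for u
  have hexp : ∀ θ : ℝ, u θ = (Real.cos (θ / 2) : ℂ) • w
      + (-(Complex.I) * Real.sin (θ / 2)) • S.mulVec w := by
    intro θ
    rw [hu θ, matrix_exp_smul_of_sq_eq_one hS2]
    have h1 : Complex.cosh (-(Complex.I) * ((θ / 2 : ℝ) : ℂ)) = (Real.cos (θ / 2) : ℂ) := by
      rw [show -(Complex.I) * ((θ / 2 : ℝ) : ℂ) = -(((θ / 2 : ℝ) : ℂ) * Complex.I) by ring,
        Complex.cosh_neg, Complex.cosh_mul_I, Complex.ofReal_cos]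
    have h2 : Complex.sinh (-(Complex.I) * ((θ / 2 : ℝ) : ℂ))
        = -(Complex.I) * (Real.sin (θ / 2) : ℂ) := by
      rw [show -(Complex.I) * ((θ / 2 : ℝ) : ℂ) = -(((θ / 2 : ℝ) : ℂ) * Complex.I) by ring,
        Complex.sinh_neg, Complex.sinh_mul_I, Complex.ofReal_sin]
      ring
    rw [h1, h2, add_mulVec, smul_mulVec, smul_mulVec, one_mulVec]
  set a := star w ⬝ᵥ B.mulVec w with ha
  set b := star w ⬝ᵥ B.mulVec (S.mulVec w) with hb
  set c := star (S.mulVec w) ⬝ᵥ B.mulVec w with hc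
  set d := star (S.mulVec w) ⬝ᵥ B.mulVec (S.mulVec w) with hd
  have key : ∀ θ : ℝ, star (u θ) ⬝ᵥ B.mulVec (u θ)
      = (Real.cos (θ / 2) : ℂ) ^ 2 * a + (Real.sin (θ / 2) : ℂ) ^ 2 * d
        + (Real.cos (θ / 2) : ℂ) * (Real.sin (θ / 2) : ℂ) * (-(Complex.I)) * (b - c) := by
    intro θ
    rw [hexp θ]
    simp only [star_add, star_smul, mulVec_add, mulVec_smul, add_dotProduct, dotProduct_add,
      smul_dotProduct, dotProduct_smul, smul_eq_mul, RCLike.star_def, _root_.map_mul, map_neg,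
      Complex.conj_I, Complex.conj_ofReal]
    linear_combination (-(Real.sin (θ / 2) : ℂ) ^ 2 * d) * Complex.I_mul_I
  set p := (a.re + d.re) / 2 with hp
  set q := (a.re - d.re) / 2 with hq
  set r := (b.im - c.im) / 2 with hr
  have trig : ∀ θ : ℝ, f θ = p + q * Real.cos θ + r * Real.sin θ := by
    intro θ
    rw [hf θ, key θ]
    have e1 : Real.cos (θ / 2) ^ 2 = 1 / 2 + Real.cos (2 * (θ / 2)) / 2 := Real.cos_sq _
    have e2 : Real.sin (θ / 2) ^ 2 + Real.cos (θ / 2) ^ 2 = 1 := Real.sin_sq_add_cos_sq _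
    have e3 : Real.sin (2 * (θ / 2)) = 2 * Real.sin (θ / 2) * Real.cos (θ / 2) :=
      Real.sin_two_mul _
    rw [show 2 * (θ / 2) = θ by ring] at e1 e3
    have e2' : Real.sin (θ / 2) ^ 2 = 1 / 2 - Real.cos θ / 2 := by linarith
    rw [hp, hq, hr]
    simp only [Complex.add_re, Complex.mul_re, Complex.sub_re, Complex.sub_im, Complex.mul_im,
      Complex.neg_re, Complex.neg_im, Complex.I_re, Complex.I_im, Complex.ofReal_re,
      Complex.ofReal_im, ← Complex.ofReal_pow]
    linear_combination a.re * e1 + d.re * e2' + (-(b.im - c.im) / 2) * e3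
  have hfun : f = fun θ => p + q * Real.cos θ + r * Real.sin θ := funext trig
  intro θ
  have hderiv : HasDerivAt (fun θ => p + q * Real.cos θ + r * Real.sin θ)
      (0 + q * (-Real.sin θ) + r * Real.cos θ) θ := by
    exact ((hasDerivAt_const θ p).add ((Real.hasDerivAt_cos θ).const_mul q)).add
      ((Real.hasDerivAt_sin θ).const_mul r)
  rw [hfun]
  convert hderiv using 1
  simp only [trig, Real.cos_add, Real.sin_add, Real.cos_sub, Real.sin_sub,
    Real.cos_pi_div_two, Real.sin_pi_div_two]
  ring
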